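/- Let 0 < α < d, 0 < λ < ∞. Set K(S) = min((λℓ_S)^α, 1)/(λ^α |S|). Let 1 < q < p < ∞, 1/r = 1/q − 1/p, and θ_1, θ_2 > 1 with 1/q = 1/(θ_2 p) + θ_1/r. Let v be a weight with ‖v‖_{L^{θ_1}(dx)}^{θ_1/r} < ∞, and let 𝒮 be an η-sparse family of dyadic cubes. Then [∑_{S∈𝒮} (K(S)|S| (v(S)/|S|)^{1/q})^r |E_𝒮(S)|]^{1/r} ≲ ‖v‖_{L^{θ_1}(dx)}^{θ_1/r} · sup_{S∈𝒮} K(S)|S| (v(S)/|S|)^{1/(θ_2 p)}. -/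

import Mathlib

open MeasureTheory ENNReal

/-- The dyadic cube `2^{-k}(m + [0,1)^d)` in `ℝ^d`. -/
def dyadicCube (d : ℕ) (k : ℤ) (m : Fin d → ℤ) :
    Set (EuclideanSpace ℝ (Fin d)) :=
  {x | ∀ i, x i ∈ Set.Ico ((2:ℝ) ^ (-k) * m i) ((2:ℝ) ^ (-k) * (m i + 1))}

lemma dyadicCube_eq_preimage (d : ℕ) (k : ℤ) (m : Fin d → ℤ) :
    dyadicCube d k m = (MeasurableEquiv.toLp 2 (Fin d → ℝ)).symm ⁻¹'
      (Set.univ.pi fun i => Set.Ico ((2:ℝ)^(-k) * m i) ((2:ℝ)^(-k) * (m i + 1))) := by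
  ext x
  simp [dyadicCube, Set.mem_pi, MeasurableEquiv.toLp]
  rfl

lemma measurableSet_dyadicCube (d : ℕ) (k : ℤ) (m : Fin d → ℤ) :
    MeasurableSet (dyadicCube d k m) := by
  rw [dyadicCube_eq_preimage]
  exact (MeasurableEquiv.toLp 2 (Fin d → ℝ)).symm.measurable
    (MeasurableSet.univ_pi fun i => measurableSet_Ico)

lemma volume_dyadicCube (d : ℕ) (k : ℤ) (m : Fin d → ℤ) :
    volume (dyadicCube d k m) = ENNReal.ofReal ((2:ℝ)^(-k)) ^ d := by
  rw [dyadicCube_eq_preimage,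
    (EuclideanSpace.volume_preserving_symm_measurableEquiv_toLp (Fin d)).measure_preimage
      ((MeasurableSet.univ_pi fun i => measurableSet_Ico).nullMeasurableSet)]
  rw [volume_pi_pi]
  have h : ∀ x : Fin d, volume (Set.Ico ((2:ℝ)^(-k) * m x) ((2:ℝ)^(-k) * (m x + 1)))
      = ENNReal.ofReal ((2:ℝ)^(-k)) := by
    intro x; rw [Real.volume_Ico]; congr 1; ring
  rw [Finset.prod_congr rfl (fun x _ => h x), Finset.prod_const, Finset.card_univ,
    Fintype.card_fin]

lemma volume_dyadicCube_ne_zero (d : ℕ) (k : ℤ) (m : Fin d → ℤ) :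
    volume (dyadicCube d k m) ≠ 0 := by
  rw [volume_dyadicCube]
  apply pow_ne_zero
  simp [ENNReal.ofReal_eq_zero, not_le]
  positivity

lemma volume_dyadicCube_ne_top (d : ℕ) (k : ℤ) (m : Fin d → ℤ) :
    volume (dyadicCube d k m) ≠ ⊤ := by
  rw [volume_dyadicCube]
  exact (pow_ne_top ENNReal.ofReal_ne_top)

lemma dyadicCube_subset (d : ℕ) {k k' : ℤ} {m m' : Fin d → ℤ} (hkk : k ≤ k')
    (h : (dyadicCube d k m ∩ dyadicCube d k' m').Nonempty) :
    dyadicCube d k' m' ⊆ dyadicCube d k m := by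
  obtain ⟨x, hx, hx'⟩ := h
  intro y hy i
  have hx1 := hx i; have hx2 := hx' i; have hy1 := hy i
  simp only [Set.mem_Ico] at hx1 hx2 hy1 ⊢
  set n : ℕ := (k' - k).toNat with hn
  have hkn : k' = k + n := by simp [hn]; omega
  have h2k : (0:ℝ) < 2 ^ k := by positivity
  have h2k' : (0:ℝ) < 2 ^ k' := by positivity
  have h2n : (0:ℝ) < 2 ^ n := by positivity
  have e : ∀ z : ℝ, (2:ℝ)^k' * z = 2^n * (2^k * z) := by
    intro z
    rw [hkn, zpow_add₀ (two_ne_zero), zpow_natCast]; ring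
  have key : ∀ z a : ℝ, (2:ℝ)^(-k') * a ≤ z ↔ a ≤ 2^k' * z := by
    intro z a
    rw [zpow_neg, inv_mul_le_iff₀ h2k', mul_comm]
  have key2 : ∀ z a : ℝ, z < (2:ℝ)^(-k') * a ↔ 2^k' * z < a := by
    intro z a
    rw [zpow_neg, lt_inv_mul_iff₀ h2k', mul_comm]
  have keyk : ∀ z a : ℝ, (2:ℝ)^(-k) * a ≤ z ↔ ((2:ℝ)^n * a) ≤ 2^k' * z := by
    intro z a
    rw [e, zpow_neg, inv_mul_le_iff₀ h2k, mul_le_mul_iff_right₀ h2n, mul_comm]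
  have keyk2 : ∀ z a : ℝ, z < (2:ℝ)^(-k) * a ↔ 2^k' * z < ((2:ℝ)^n * a) := by
    intro z a
    rw [e, zpow_neg, lt_inv_mul_iff₀ h2k, mul_lt_mul_iff_right₀ h2n, mul_comm]
  have hxk1 : (2:ℝ)^n * m i ≤ 2^k' * x i := (keyk _ _).1 hx1.1
  have hxk2 : 2^k' * x i < (2:ℝ)^n * ((m i : ℝ) + 1) := (keyk2 _ _).1 hx1.2
  have hx'1 : ((m' i : ℝ)) ≤ 2^k' * x i := (key _ _).1 hx2.1
  have hx'2 : 2^k' * x i < ((m' i : ℝ)) + 1 := (key2 _ _).1 hx2.2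
  have hZ1 : (2:ℤ)^n * m i ≤ m' i := by
    have hlt : (2:ℝ)^n * m i < (m' i : ℝ) + 1 := lt_of_le_of_lt hxk1 hx'2
    have hlt2 : ((2^n * m i : ℤ) : ℝ) < ((m' i + 1 : ℤ) : ℝ) := by push_cast; push_cast at hlt; linarith
    have := (by exact_mod_cast hlt2 : (2:ℤ)^n * m i < m' i + 1)
    omega
  have hZ2 : m' i + 1 ≤ (2:ℤ)^n * (m i + 1) := by
    have hlt : (m' i : ℝ) < (2:ℝ)^n * ((m i : ℝ) + 1) := lt_of_le_of_lt hx'1 hxk2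
    have hlt2 : ((m' i : ℤ) : ℝ) < ((2^n * (m i + 1) : ℤ) : ℝ) := by push_cast; push_cast at hlt; linarith
    have := (by exact_mod_cast hlt2 : (m' i : ℤ) < 2^n * (m i + 1))
    omega
  have hy1' : ((m' i : ℝ)) ≤ 2^k' * y i := (key _ _).1 hy1.1
  have hy2' : 2^k' * y i < ((m' i : ℝ)) + 1 := (key2 _ _).1 hy1.2
  constructor
  · rw [keyk]
    calc ((2:ℝ)^n * m i) = ((2^n * m i : ℤ) : ℝ) := by push_cast; ring
    _ ≤ ((m' i : ℤ) : ℝ) := by exact_mod_cast hZ1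
    _ ≤ 2^k' * y i := hy1'
  · rw [keyk2]
    calc 2^k' * y i < ((m' i : ℝ)) + 1 := hy2'
    _ = ((m' i + 1 : ℤ) : ℝ) := by push_cast; ring
    _ ≤ ((2^n * (m i + 1) : ℤ) : ℝ) := by exact_mod_cast hZ2
    _ = (2:ℝ)^n * ((m i : ℝ) + 1) := by push_cast; ring

lemma dyadicCube_eq_of_eq_k (d : ℕ) {k : ℤ} {m m' : Fin d → ℤ}
    (h : (dyadicCube d k m ∩ dyadicCube d k m').Nonempty) : m = m' := by
  obtain ⟨x, hx, hx'⟩ := h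
  funext i
  have h1 := hx i; have h2 := hx' i
  simp only [Set.mem_Ico] at h1 h2
  have h2k : (0:ℝ) < 2 ^ (-k) := by positivity
  by_contra hne
  rcases lt_or_gt_of_ne hne with hlt | hlt
  · have : (m i : ℝ) + 1 ≤ m' i := by exact_mod_cast (by omega : m i + 1 ≤ m' i)
    have : (2:ℝ)^(-k) * (m i + 1) ≤ 2^(-k) * m' i :=
      mul_le_mul_of_nonneg_left this h2k.le
    linarith [h1.2, h2.1]
  · have : (m' i : ℝ) + 1 ≤ m i := by exact_mod_cast (by omega : m' i + 1 ≤ m i)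
    have : (2:ℝ)^(-k) * (m' i + 1) ≤ 2^(-k) * m i :=
      mul_le_mul_of_nonneg_left this h2k.le
    linarith [h1.1, h2.2]

lemma holder_avg {α : Type*} [MeasurableSpace α] {μ : Measure α} {v : α → ℝ≥0∞}
    (hv : Measurable v) {θ : ℝ} (hθ : 1 < θ) (S : Set α) :
    ∫⁻ x in S, v x ∂μ ≤ (∫⁻ x, v x ^ θ ∂μ) ^ (1/θ) * (μ S) ^ (1 - 1/θ) := by
  have hθ0 : (0:ℝ) < θ := by linarith
  have hpq : θ.HolderConjugate (θ/(θ-1)) := Real.HolderConjugate.conjExponent hθ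
  have h := ENNReal.lintegral_mul_le_Lp_mul_Lq (μ.restrict S) hpq hv.aemeasurable
    (aemeasurable_const (b := (1:ℝ≥0∞)))
  simp only [Pi.mul_apply, mul_one, ENNReal.one_rpow, lintegral_one,
    Measure.restrict_apply_univ] at h
  refine h.trans ?_
  have e : 1/(θ/(θ-1)) = 1 - 1/θ := by field_simp
  rw [e]
  exact mul_le_mul_left (ENNReal.rpow_le_rpow (setLIntegral_le_lintegral _ _)
    (by positivity)) _

lemma size_bound {α : Type*} [MeasurableSpace α] {μ : Measure α} {v : α → ℝ≥0∞}
    (hv : Measurable v) {θ : ℝ} (hθ : 1 < θ) {S : Set α}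
    (hS0 : μ S ≠ 0) (hSt : μ S ≠ ⊤) {t : ℝ≥0∞}
    (ht : t * μ S ≤ ∫⁻ x in S, v x ∂μ) :
    t ^ θ * μ S ≤ ∫⁻ x, v x ^ θ ∂μ := by
  have hθ0 : (0:ℝ) < θ := by linarith
  set N := ∫⁻ x, v x ^ θ ∂μ with hN
  set V := μ S with hV
  have h1 : (t * V) ^ θ ≤ (N ^ (1/θ) * V ^ (1 - 1/θ)) ^ θ :=
    ENNReal.rpow_le_rpow (ht.trans (holder_avg hv hθ S)) hθ0.le
  rw [ENNReal.mul_rpow_of_nonneg _ _ hθ0.le, ENNReal.mul_rpow_of_nonneg _ _ hθ0.le,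
    ← ENNReal.rpow_mul, ← ENNReal.rpow_mul, one_div_mul_cancel hθ0.ne',
    ENNReal.rpow_one] at h1
  have e2 : (1 - 1/θ) * θ = θ - 1 := by field_simp
  rw [e2] at h1
  have e3 : V ^ θ = V * V ^ (θ - 1) := by
    have h := ENNReal.rpow_add 1 (θ - 1) hS0 hSt
    rw [ENNReal.rpow_one] at h
    rw [← h]
    congr 1; ring
  rw [e3] at h1
  have hne0 : V ^ (θ - 1) ≠ 0 := by
    simp [ENNReal.rpow_eq_zero_iff, hS0, hSt]
  have hnet : V ^ (θ - 1) ≠ ⊤ := ENNReal.rpow_ne_top_of_nonneg (by linarith) hSt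
  rw [← mul_assoc] at h1
  exact (ENNReal.mul_le_mul_iff_left hne0 hnet).1 h1

lemma one_sub_inv_nonneg {θ : ℝ} (hθ : 1 < θ) : (0:ℝ) ≤ 1 - 1/θ := by
  have hθ0 : (0:ℝ) < θ := by linarith
  have : 1/θ ≤ 1 := by rw [div_le_one hθ0]; linarith
  linarith

lemma avg_ne_top {α : Type*} [MeasurableSpace α] {μ : Measure α} {v : α → ℝ≥0∞}
    (hv : Measurable v) {θ : ℝ} (hθ : 1 < θ) {S : Set α}
    (hN : (∫⁻ x, v x ^ θ ∂μ) ≠ ⊤) (hS0 : μ S ≠ 0) (hSt : μ S ≠ ⊤) :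
    (∫⁻ x in S, v x ∂μ) / μ S ≠ ⊤ := by
  have h := holder_avg hv hθ (μ := μ) S
  have hfin : (∫⁻ x in S, v x ∂μ) ≠ ⊤ :=
    ne_top_of_le_ne_top (ENNReal.mul_ne_top
      (ENNReal.rpow_ne_top_of_nonneg (by positivity) hN)
      (ENNReal.rpow_ne_top_of_nonneg (one_sub_inv_nonneg hθ) hSt)) h
  exact (ENNReal.div_lt_top hfin hS0).ne

lemma ofReal_two_zpow (n : ℤ) : ENNReal.ofReal ((2:ℝ)^n) = (2:ℝ≥0∞)^n := by
  rw [← Real.rpow_intCast 2 n, ← ENNReal.ofReal_rpow_of_pos two_pos,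
    show ENNReal.ofReal 2 = 2 by norm_num, ENNReal.rpow_intCast]

lemma two_zpow_ne_zero (n : ℤ) : ((2:ℝ≥0∞)^n) ≠ 0 :=
  (ENNReal.zpow_pos (by norm_num) (by norm_num) n).ne'

lemma two_zpow_ne_top (n : ℤ) : ((2:ℝ≥0∞)^n) ≠ ⊤ :=
  (ENNReal.zpow_lt_top (by norm_num) (by norm_num) n).ne

lemma two_rpow_ne_top (e : ℝ) : ((2:ℝ≥0∞)^e) ≠ ⊤ := by
  intro h
  rw [ENNReal.rpow_eq_top_iff] at h
  rcases h with ⟨h1, _⟩ | ⟨h1, _⟩ <;> norm_num at h1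

lemma one_lt_two_rpow {e : ℝ} (he : 0 < e) : 1 < (2:ℝ≥0∞)^e := by
  calc (1:ℝ≥0∞) = (2:ℝ≥0∞) ^ (0:ℝ) := by rw [ENNReal.rpow_zero]
  _ < (2:ℝ≥0∞) ^ e := ENNReal.rpow_lt_rpow_of_exponent_lt (by norm_num) (by norm_num) he

lemma rpow_zpow_comm (e : ℝ) (n : ℤ) : ((2:ℝ≥0∞)^e)^n = ((2:ℝ≥0∞)^n)^e := by
  rw [← ENNReal.rpow_intCast ((2:ℝ≥0∞)^e) n, ← ENNReal.rpow_mul,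
    ← ENNReal.rpow_intCast (2:ℝ≥0∞) n, ← ENNReal.rpow_mul, mul_comm]

lemma geom_tail {c : ℝ≥0∞} (hc1 : 1 < c) (hct : c ≠ ⊤) (n₁ : ℤ) :
    ∑' n : {n : ℤ // n ≤ n₁}, c ^ (n : ℤ) ≤ c ^ n₁ * (1 - c⁻¹)⁻¹ := by
  have hc0 : c ≠ 0 := (zero_lt_one.trans hc1).ne'
  have he : ∀ kk : ℕ, ((⟨n₁ - kk, by omega⟩ : {n : ℤ // n ≤ n₁}) : ℤ) = n₁ - kk := fun _ => rfl
  let e : ℕ ≃ {n : ℤ // n ≤ n₁} :=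
    { toFun := fun kk => ⟨n₁ - kk, by omega⟩
      invFun := fun n => (n₁ - n.1).toNat
      left_inv := fun kk => by simp
      right_inv := fun n => by
        ext
        simp only []
        omega }
  rw [← e.tsum_eq]
  have hterm : ∀ kk : ℕ, c ^ ((e kk : {n : ℤ // n ≤ n₁}) : ℤ) = c ^ n₁ * (c⁻¹) ^ kk := by
    intro kk
    show c ^ (n₁ - (kk:ℤ)) = _
    rw [sub_eq_add_neg, ENNReal.zpow_add hc0 hct, ENNReal.zpow_neg, zpow_natCast, ENNReal.inv_pow]
  calc ∑' kk : ℕ, c ^ ((e kk : {n : ℤ // n ≤ n₁}) : ℤ)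
      = ∑' kk : ℕ, c ^ n₁ * (c⁻¹) ^ kk := by exact tsum_congr hterm
  _ = c ^ n₁ * ∑' kk : ℕ, (c⁻¹) ^ kk := ENNReal.tsum_mul_left
  _ = c ^ n₁ * (1 - c⁻¹)⁻¹ := by rw [ENNReal.tsum_geometric]
  _ ≤ c ^ n₁ * (1 - c⁻¹)⁻¹ := le_rfl

lemma layer_upper {e : ℝ} (he : 0 < e) (s : ℝ≥0∞) :
    ∑' n : ℤ, (if (2:ℝ≥0∞)^n < s then ((2:ℝ≥0∞)^e)^n else 0)
      ≤ s ^ e * (1 - ((2:ℝ≥0∞)^e)⁻¹)⁻¹ := by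
  set c : ℝ≥0∞ := (2:ℝ≥0∞)^e with hc
  have hc1 : 1 < c := one_lt_two_rpow he
  have hct : c ≠ ⊤ := two_rpow_ne_top e
  rcases eq_or_ne s 0 with rfl | hs0
  · simp
  rcases eq_or_ne s ⊤ with rfl | hst
  · rw [ENNReal.top_rpow_of_pos he, ENNReal.top_mul]
    · exact le_top
    · simp only [ne_eq, ENNReal.inv_eq_zero]
      exact fun h => hct (by simpa using (ENNReal.sub_eq_top_iff.1 h).1)
  · have hsr : 0 < s.toReal := ENNReal.toReal_pos hs0 hst
    obtain ⟨n₁, hn₁⟩ := exists_mem_Ico_zpow hsr one_lt_two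
    have hptwise : ∀ n : ℤ, (if (2:ℝ≥0∞)^n < s then c^n else 0)
        ≤ Set.indicator {n : ℤ | n ≤ n₁} (fun n => c^n) n := by
      intro n
      split_ifs with h
      · have h1 : (2:ℝ)^n < s.toReal := by
          rw [← ENNReal.ofReal_lt_iff_lt_toReal (by positivity : (0:ℝ) ≤ (2:ℝ)^n) hst,
            ofReal_two_zpow]
          exact h
        have h2 : (2:ℝ)^n < (2:ℝ)^(n₁+1) := lt_of_lt_of_le h1 (le_of_lt hn₁.2)
        have hn : n ≤ n₁ := by
          have := (zpow_lt_zpow_iff_right₀ (by norm_num : (1:ℝ) < 2)).1 h2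
          omega
        rw [Set.indicator_of_mem (by exact hn)]
      · exact zero_le
    calc ∑' n : ℤ, (if (2:ℝ≥0∞)^n < s then c^n else 0)
        ≤ ∑' n : ℤ, Set.indicator {n : ℤ | n ≤ n₁} (fun n => c^n) n :=
          ENNReal.tsum_le_tsum hptwise
    _ = ∑' n : {n : ℤ // n ≤ n₁}, c ^ (n : ℤ) := (tsum_subtype _ _).symm
    _ ≤ c ^ n₁ * (1 - c⁻¹)⁻¹ := geom_tail hc1 hct n₁
    _ ≤ s ^ e * (1 - c⁻¹)⁻¹ := by
        apply mul_le_mul_left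
        rw [hc, rpow_zpow_comm]
        apply ENNReal.rpow_le_rpow _ he.le
        rw [← ofReal_two_zpow]
        exact ENNReal.ofReal_le_of_le_toReal hn₁.1

lemma layer_lower {e : ℝ} (he : 0 < e) (a : ℝ≥0∞) :
    a ^ e ≤ (2:ℝ≥0∞)^e * ∑' n : ℤ, (if (2:ℝ≥0∞)^n < a then ((2:ℝ≥0∞)^e)^n else 0) := by
  set c : ℝ≥0∞ := (2:ℝ≥0∞)^e with hc
  have hc1 : 1 < c := one_lt_two_rpow he
  have hc0 : c ≠ 0 := (zero_lt_one.trans hc1).ne'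
  rcases eq_or_ne a 0 with rfl | ha0
  · simp [ENNReal.zero_rpow_of_pos he]
  rcases eq_or_ne a ⊤ with rfl | hat
  · have hsum : ∑' n : ℤ, (if (2:ℝ≥0∞)^n < (⊤:ℝ≥0∞) then c^n else 0) = ⊤ := by
      have h1 : ∀ n : ℤ, (if (2:ℝ≥0∞)^n < (⊤:ℝ≥0∞) then c^n else 0) = c^n := by
        intro n
        rw [if_pos (ENNReal.zpow_lt_top (by norm_num) (by norm_num) n)]
      rw [tsum_congr h1]
      have h2 : ∑' kk : ℕ, c ^ (kk:ℤ) ≤ ∑' n : ℤ, c ^ n :=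
        ENNReal.tsum_comp_le_tsum_of_injective Nat.cast_injective (fun n : ℤ => c ^ n)
      have h3 : ∑' kk : ℕ, c ^ (kk:ℤ) = ⊤ := by
        have : ∀ kk : ℕ, c ^ (kk:ℤ) = c ^ kk := fun kk => zpow_natCast c kk
        rw [tsum_congr this, ENNReal.tsum_geometric, tsub_eq_zero_of_le hc1.le,
          ENNReal.inv_zero]
      rw [eq_top_iff]
      rw [h3] at h2
      exact h2
    rw [hsum, ENNReal.mul_top hc0]
    exact le_top
  · have har : 0 < a.toReal := ENNReal.toReal_pos ha0 hat
    obtain ⟨n₀, hn₀⟩ := exists_mem_Ioc_zpow har one_lt_two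
    have hcond : (2:ℝ≥0∞)^n₀ < a := by
      rw [← ofReal_two_zpow]
      exact (ENNReal.ofReal_lt_iff_lt_toReal (by positivity) hat).2 hn₀.1
    have hsingle : c ^ n₀ ≤ ∑' n : ℤ, (if (2:ℝ≥0∞)^n < a then c^n else 0) := by
      have := ENNReal.le_tsum (f := fun n : ℤ => (if (2:ℝ≥0∞)^n < a then c^n else 0)) n₀
      rwa [if_pos hcond] at this
    calc a ^ e ≤ ((2:ℝ≥0∞)^(n₀+1)) ^ e := by
          apply ENNReal.rpow_le_rpow _ he.le
          rw [← ofReal_two_zpow]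
          exact ENNReal.le_ofReal_iff_toReal_le hat (by positivity) |>.2 hn₀.2
    _ = c * c ^ n₀ := by
        have hct : c ≠ ⊤ := two_rpow_ne_top e
        rw [← rpow_zpow_comm, ENNReal.zpow_add hc0 hct, zpow_one, mul_comm]
    _ ≤ c * ∑' n : ℤ, (if (2:ℝ≥0∞)^n < a then c^n else 0) := mul_le_mul_right hsingle _

section Core

variable {d : ℕ} {θ : ℝ} {ι : Type} [Countable ι]

lemma W_bound (hd : 1 ≤ d) (hθ : 1 < θ) (k : ι → ℤ) (m : ι → Fin d → ℤ)
    (E : ι → Set (EuclideanSpace ℝ (Fin d)))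
    (hEmeas : ∀ j, MeasurableSet (E j))
    (hEsub : ∀ j, E j ⊆ dyadicCube d (k j) (m j))
    (hdisj : Pairwise (Function.onFun Disjoint E))
    (v : EuclideanSpace ℝ (Fin d) → ℝ≥0∞) (hv : Measurable v)
    (hN : (∫⁻ x, v x ^ θ) ≠ ⊤) (n : ℤ) :
    ∑' j, (if (2:ℝ≥0∞)^n < (∫⁻ x in dyadicCube d (k j) (m j), v x) /
        volume (dyadicCube d (k j) (m j)) then volume (E j) else 0)
      ≤ 2 * ((2:ℝ≥0∞)^n)⁻¹ *
        ∫⁻ x, v x * Set.indicator {y | (2:ℝ≥0∞)^n < 2 * v y} 1 x := by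
  classical
  set t : ℝ≥0∞ := (2:ℝ≥0∞)^n with hts
  have ht0 : t ≠ 0 := two_zpow_ne_zero n
  have htt : t ≠ ⊤ := two_zpow_ne_top n
  set S : ι → Set (EuclideanSpace ℝ (Fin d)) := fun j => dyadicCube d (k j) (m j) with hS
  set V : ι → ℝ≥0∞ := fun j => volume (S j) with hV
  set a : ι → ℝ≥0∞ := fun j => (∫⁻ x in S j, v x) / V j with ha
  set w : EuclideanSpace ℝ (Fin d) → ℝ≥0∞ :=
    fun x => v x * Set.indicator {y | t < 2 * v y} 1 x with hw
  have hwmeas : Measurable w := by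
    apply hv.mul
    exact measurable_one.indicator ((hv.const_mul 2) measurableSet_Ioi)
  have hV0 : ∀ j, V j ≠ 0 := fun j => volume_dyadicCube_ne_zero d (k j) (m j)
  have hVt : ∀ j, V j ≠ ⊤ := fun j => volume_dyadicCube_ne_top d (k j) (m j)
  have htV : ∀ j, t < a j → t * V j ≤ ∫⁻ x in S j, v x := by
    intro j hj
    calc t * V j ≤ a j * V j := mul_le_mul_left hj.le _
    _ = ∫⁻ x in S j, v x := ENNReal.div_mul_cancel (hV0 j) (hVt j)
  -- lower bound on k j for j in the family
  obtain ⟨K₀, hK₀⟩ : ∃ K₀ : ℤ, ∀ j, t < a j → K₀ ≤ k j := by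
    set M : ℝ≥0∞ := (∫⁻ x, v x ^ θ) / t ^ θ with hM
    have hMt : M ≠ ⊤ := by
      apply (ENNReal.div_lt_top hN _).ne
      simp [ENNReal.rpow_eq_zero_iff, ht0, htt]
    have hVM : ∀ j, t < a j → V j ≤ M := by
      intro j hj
      rw [hM, ENNReal.le_div_iff_mul_le (Or.inl (by simp [ENNReal.rpow_eq_zero_iff, ht0, htt]))
        (Or.inl (ENNReal.rpow_ne_top_of_nonneg (by linarith) htt))]
      rw [mul_comm]
      exact size_bound hv hθ (hV0 j) (hVt j) (htV j hj)
    obtain ⟨nn, hnn⟩ := pow_unbounded_of_one_lt (max M.toReal 1) (one_lt_two (α := ℝ))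
    refine ⟨-(nn:ℤ), fun j hj => ?_⟩
    by_contra hcon
    push_neg at hcon
    have hkneg : (nn:ℤ) < -(k j) := by omega
    have h2 : (2:ℝ)^(nn:ℤ) < (2:ℝ)^(-(k j)) :=
      (zpow_lt_zpow_iff_right₀ (by norm_num : (1:ℝ) < 2)).2 hkneg
    have hb1 : (1:ℝ) ≤ (2:ℝ)^(-(k j)) := by
      calc (1:ℝ) ≤ 2^(nn:ℤ) := one_le_zpow₀ (by norm_num) (by positivity)
      _ ≤ _ := h2.le
    have hd1 : 1 ≤ d := hd
    have hpow : (2:ℝ)^(-(k j)) ≤ ((2:ℝ)^(-(k j)))^d := by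
      calc (2:ℝ)^(-(k j)) = ((2:ℝ)^(-(k j)))^1 := (pow_one _).symm
      _ ≤ ((2:ℝ)^(-(k j)))^d := pow_le_pow_right₀ hb1 hd1
    have hreal : ((2:ℝ)^(-(k j)))^d ≤ M.toReal := by
      have h1 : V j = ENNReal.ofReal ((2:ℝ)^(-(k j))) ^ d := volume_dyadicCube d (k j) (m j)
      have h2' : ENNReal.ofReal (((2:ℝ)^(-(k j)))^d) ≤ M := by
        rw [ENNReal.ofReal_pow (by positivity), ← h1]
        exact hVM j hj
      calc ((2:ℝ)^(-(k j)))^d = (ENNReal.ofReal (((2:ℝ)^(-(k j)))^d)).toReal := by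
            rw [ENNReal.toReal_ofReal (by positivity)]
      _ ≤ M.toReal := ENNReal.toReal_mono hMt h2'
    have hfin : (2:ℝ)^(nn:ℤ) < max M.toReal 1 :=
      lt_of_lt_of_le h2 (hpow.trans (hreal.trans (le_max_left _ _)))
    rw [zpow_natCast] at hfin
    linarith
  -- the set of maximal cubes
  set P : Set (ℤ × (Fin d → ℤ)) :=
    {q | (∃ j, t < a j ∧ k j = q.1 ∧ m j = q.2) ∧
      ∀ j', t < a j' → (dyadicCube d q.1 q.2 ∩ S j').Nonempty → q.1 ≤ k j'} with hP
  have cover : ∀ j, t < a j → ∃ q ∈ P, S j ⊆ dyadicCube d q.1 q.2 := by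
    intro j hj
    obtain ⟨lb, ⟨j', hj', hkj', hsub⟩, hleast⟩ :=
      Int.exists_least_of_bdd (P := fun nn => ∃ j'', t < a j'' ∧ k j'' = nn ∧ S j ⊆ S j'')
        ⟨K₀, fun z ⟨j'', hj'', hk'', _⟩ => hk'' ▸ hK₀ j'' hj''⟩
        ⟨k j, j, hj, rfl, subset_rfl⟩
    refine ⟨(k j', m j'), ⟨⟨j', hj', rfl, rfl⟩, ?_⟩, hsub⟩
    intro j'' hj'' hne
    by_contra hcon
    push_neg at hcon
    have hsub2 : S j' ⊆ S j'' := by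
      apply dyadicCube_subset d hcon.le
      obtain ⟨x, hx1, hx2⟩ := hne
      exact ⟨x, hx2, hx1⟩
    have : lb ≤ k j'' := hleast (k j'') ⟨j'', hj'', rfl, hsub.trans hsub2⟩
    omega
  have Pavg : ∀ q ∈ P, t * volume (dyadicCube d q.1 q.2) ≤
      ∫⁻ x in dyadicCube d q.1 q.2, v x := by
    rintro q ⟨⟨j, hj, hk, hm⟩, -⟩
    have : dyadicCube d q.1 q.2 = S j := by rw [← hk, ← hm]
    rw [this]
    exact htV j hj
  have Pdisj : ∀ q ∈ P, ∀ q' ∈ P, q ≠ q' →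
      Disjoint (dyadicCube d q.1 q.2) (dyadicCube d q'.1 q'.2) := by
    intro q hq q' hq' hne
    rw [Set.disjoint_iff_inter_eq_empty]
    by_contra hcon
    have hnonempty : (dyadicCube d q.1 q.2 ∩ dyadicCube d q'.1 q'.2).Nonempty :=
      Set.nonempty_iff_ne_empty.2 hcon
    obtain ⟨⟨j1, hj1, hk1, hm1⟩, hmax1⟩ := hq
    obtain ⟨⟨j2, hj2, hk2, hm2⟩, hmax2⟩ := hq'
    have e2 : dyadicCube d q'.1 q'.2 = S j2 := by rw [← hk2, ← hm2]
    have e1 : dyadicCube d q.1 q.2 = S j1 := by rw [← hk1, ← hm1]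
    have h12 : q.1 ≤ k j2 := hmax1 j2 hj2 (by rwa [← e2])
    have h21 : q'.1 ≤ k j1 := hmax2 j1 hj1 (by
      rw [← e1]
      obtain ⟨x, hx1, hx2⟩ := hnonempty
      exact ⟨x, hx2, hx1⟩)
    rw [hk2] at h12
    rw [hk1] at h21
    have hkeq : q.1 = q'.1 := le_antisymm h12 h21
    have hmeq : q.2 = q'.2 := by
      apply dyadicCube_eq_of_eq_k d
      rwa [← hkeq] at hnonempty
    exact hne (Prod.ext hkeq hmeq)
  have Psize : ∀ q ∈ P, volume (dyadicCube d q.1 q.2) ≤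
      2 * t⁻¹ * ∫⁻ x in dyadicCube d q.1 q.2, w x := by
    intro q hq
    set Q := dyadicCube d q.1 q.2
    have hQ0 : volume Q ≠ 0 := volume_dyadicCube_ne_zero d q.1 q.2
    have hQt : volume Q ≠ ⊤ := volume_dyadicCube_ne_top d q.1 q.2
    have hpt : ∀ x, v x ≤ t / 2 + w x := by
      intro x
      rw [hw]
      by_cases hx : t < 2 * v x
      · simp only [Set.indicator_of_mem (by exact hx : x ∈ {y | t < 2 * v y}), Pi.one_apply,
          mul_one]
        exact le_add_self
      · push_neg at hx
        have : v x ≤ t / 2 := by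
          rw [ENNReal.le_div_iff_mul_le (Or.inl (by norm_num)) (Or.inl (by norm_num))]
          rwa [mul_comm]
        exact this.trans le_self_add
    have hint : ∫⁻ x in Q, v x ≤ t / 2 * volume Q + ∫⁻ x in Q, w x := by
      calc ∫⁻ x in Q, v x ≤ ∫⁻ x in Q, (t / 2 + w x) := lintegral_mono hpt
      _ = t / 2 * volume Q + ∫⁻ x in Q, w x := by
          rw [lintegral_add_left measurable_const, setLIntegral_const]
    have hhalf : t / 2 * volume Q ≤ ∫⁻ x in Q, w x := by
      have h1 : t / 2 * volume Q + t / 2 * volume Q ≤ t / 2 * volume Q + ∫⁻ x in Q, w x := by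
        calc t / 2 * volume Q + t / 2 * volume Q = t * volume Q := by
              rw [← add_mul, ENNReal.add_halves]
        _ ≤ ∫⁻ x in Q, v x := Pavg q hq
        _ ≤ _ := hint
      exact (ENNReal.add_le_add_iff_left (ENNReal.mul_ne_top
        (ENNReal.div_lt_top htt (by norm_num)).ne hQt)).1 h1
    have ht2 : t / 2 ≠ 0 := by
      simp only [ne_eq, ENNReal.div_eq_zero_iff]
      push_neg
      exact ⟨ht0, by norm_num⟩
    have ht2t : t / 2 ≠ ⊤ := (ENNReal.div_lt_top htt (by norm_num)).ne
    have hQle : volume Q ≤ (∫⁻ x in Q, w x) / (t / 2) := by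
      rw [ENNReal.le_div_iff_mul_le (Or.inl ht2) (Or.inl ht2t)]
      rwa [mul_comm]
    refine hQle.trans (le_of_eq ?_)
    have hinv : (t / 2)⁻¹ = 2 * t⁻¹ := by
      rw [div_eq_mul_inv, ENNReal.mul_inv (Or.inl ht0) (Or.inr (by norm_num)), inv_inv,
        mul_comm]
    rw [div_eq_mul_inv, hinv]
    ring
  -- assemble
  have hFm : ∀ j, MeasurableSet (if t < a j then E j else ∅) := by
    intro j; split_ifs
    · exact hEmeas j
    · exact MeasurableSet.empty
  have hFd : Pairwise (Function.onFun Disjoint fun j => if t < a j then E j else ∅) := by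
    intro i j hij
    have := hdisj hij
    unfold Function.onFun at this ⊢
    simp only []
    split_ifs
    · exact this
    · exact disjoint_bot_right
    · exact disjoint_bot_left
    · exact disjoint_bot_left
  have hPm : ∀ q : ↥P, MeasurableSet (dyadicCube d q.1.1 q.1.2) :=
    fun q => measurableSet_dyadicCube d q.1.1 q.1.2
  have hPd : Pairwise (Function.onFun Disjoint fun q : ↥P => dyadicCube d q.1.1 q.1.2) :=
    fun q q' hne => Pdisj q.1 q.2 q'.1 q'.2 (fun hc => hne (Subtype.ext hc))
  have hFU : (⋃ j, if t < a j then E j else ∅) ⊆ ⋃ q : ↥P, dyadicCube d q.1.1 q.1.2 := by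
    apply Set.iUnion_subset
    intro j
    split_ifs with hj
    · obtain ⟨q, hqP, hsub⟩ := cover j hj
      exact ((hEsub j).trans hsub).trans (Set.subset_iUnion
        (fun q : ↥P => dyadicCube d q.1.1 q.1.2) ⟨q, hqP⟩)
    · exact Set.empty_subset _
  show ∑' j, (if t < a j then volume (E j) else 0) ≤ 2 * t⁻¹ * ∫⁻ x, w x
  calc ∑' j, (if t < a j then volume (E j) else 0)
      = ∑' j, volume (if t < a j then E j else ∅) := by
        apply tsum_congr; intro j; split_ifs <;> simp
  _ = volume (⋃ j, if t < a j then E j else ∅) := (measure_iUnion hFd hFm).symm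
  _ ≤ volume (⋃ q : ↥P, dyadicCube d q.1.1 q.1.2) := measure_mono hFU
  _ = ∑' q : ↥P, volume (dyadicCube d q.1.1 q.1.2) := measure_iUnion hPd hPm
  _ ≤ ∑' q : ↥P, 2 * t⁻¹ * ∫⁻ x in dyadicCube d q.1.1 q.1.2, w x :=
        ENNReal.tsum_le_tsum (fun q => Psize q.1 q.2)
  _ = 2 * t⁻¹ * ∑' q : ↥P, ∫⁻ x in dyadicCube d q.1.1 q.1.2, w x := ENNReal.tsum_mul_left
  _ = 2 * t⁻¹ * ∫⁻ x in (⋃ q : ↥P, dyadicCube d q.1.1 q.1.2), w x := by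
        rw [lintegral_iUnion hPm hPd w]
  _ ≤ 2 * t⁻¹ * ∫⁻ x, w x := mul_le_mul_right (setLIntegral_le_lintegral _ _) _

end Core

section Core2

variable {d : ℕ} {θ : ℝ} {ι : Type} [Countable ι]

lemma self_mul_rpow {θ : ℝ} (hθ : 1 < θ) (b : ℝ≥0∞) : b * b ^ (θ - 1) = b ^ θ := by
  rcases eq_or_ne b 0 with rfl | hb0
  · rw [ENNReal.zero_rpow_of_pos (by linarith), ENNReal.zero_rpow_of_pos (by linarith), mul_zero]
  rcases eq_or_ne b ⊤ with rfl | hbt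
  · rw [ENNReal.top_rpow_of_pos (by linarith), ENNReal.top_rpow_of_pos (by linarith), mul_top
      (by simp)]
  · have h := ENNReal.rpow_add 1 (θ - 1) hb0 hbt
    rw [ENNReal.rpow_one] at h
    rw [← h]
    congr 1; ring

noncomputable def coreConst (θ : ℝ) : ℝ≥0∞ :=
  (2:ℝ≥0∞)^θ * 2 * ((2:ℝ≥0∞)^(θ-1) * (1 - ((2:ℝ≥0∞)^(θ-1))⁻¹)⁻¹)

lemma coreConst_ne_top {θ : ℝ} (hθ : 1 < θ) : coreConst θ ≠ ⊤ := by
  unfold coreConst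
  have h1 : (1 - ((2:ℝ≥0∞)^(θ-1))⁻¹)⁻¹ ≠ ⊤ := by
    rw [ne_eq, ENNReal.inv_eq_top, tsub_eq_zero_iff_le]
    rw [not_le]
    exact ENNReal.inv_lt_one.2 (one_lt_two_rpow (by linarith))
  exact ENNReal.mul_ne_top (ENNReal.mul_ne_top (two_rpow_ne_top θ) (by norm_num))
    (ENNReal.mul_ne_top (two_rpow_ne_top (θ-1)) h1)

lemma core_sparse (hd : 1 ≤ d) (hθ : 1 < θ) (k : ι → ℤ) (m : ι → Fin d → ℤ)
    (E : ι → Set (EuclideanSpace ℝ (Fin d)))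
    (hEmeas : ∀ j, MeasurableSet (E j))
    (hEsub : ∀ j, E j ⊆ dyadicCube d (k j) (m j))
    (hdisj : Pairwise (Function.onFun Disjoint E))
    (v : EuclideanSpace ℝ (Fin d) → ℝ≥0∞) (hv : Measurable v)
    (hN : (∫⁻ x, v x ^ θ) ≠ ⊤) :
    ∑' j, ((∫⁻ x in dyadicCube d (k j) (m j), v x) /
        volume (dyadicCube d (k j) (m j))) ^ θ * volume (E j)
      ≤ coreConst θ * ∫⁻ x, v x ^ θ := by
  classical
  set S : ι → Set (EuclideanSpace ℝ (Fin d)) := fun j => dyadicCube d (k j) (m j) with hS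
  set a : ι → ℝ≥0∞ := fun j => (∫⁻ x in S j, v x) / volume (S j) with ha
  set c : ℝ≥0∞ := (2:ℝ≥0∞)^θ with hc
  set c' : ℝ≥0∞ := (2:ℝ≥0∞)^(θ-1) with hc'
  have hθ1 : (0:ℝ) < θ - 1 := by linarith
  have hθ0 : (0:ℝ) < θ := by linarith
  -- step 1: layer cake lower bound
  have step1 : ∀ j, a j ^ θ * volume (E j)
      ≤ c * ∑' n : ℤ, (if (2:ℝ≥0∞)^n < a j then c^n * volume (E j) else 0) := by
    intro j
    have := layer_lower hθ0 (a j)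
    calc a j ^ θ * volume (E j)
        ≤ (c * ∑' n : ℤ, (if (2:ℝ≥0∞)^n < a j then c^n else 0)) * volume (E j) :=
          mul_le_mul_left this _
    _ = c * ∑' n : ℤ, (if (2:ℝ≥0∞)^n < a j then c^n * volume (E j) else 0) := by
        rw [mul_assoc, ← ENNReal.tsum_mul_right]
        congr 1
        apply tsum_congr
        intro n
        split_ifs <;> simp
  -- step 2: swap sums
  have step2 : ∑' j, ∑' n : ℤ, (if (2:ℝ≥0∞)^n < a j then c^n * volume (E j) else 0)
      = ∑' n : ℤ, c^n * ∑' j, (if (2:ℝ≥0∞)^n < a j then volume (E j) else 0) := by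
    rw [ENNReal.tsum_comm]
    apply tsum_congr
    intro n
    rw [← ENNReal.tsum_mul_left]
    apply tsum_congr
    intro j
    split_ifs <;> simp
  -- step 3: apply W_bound and convert coefficient
  have hcoeff : ∀ n : ℤ, c^n * (2 * ((2:ℝ≥0∞)^n)⁻¹) = 2 * c'^n := by
    intro n
    have hT0 : ((2:ℝ≥0∞)^n) ≠ 0 := two_zpow_ne_zero n
    have hTt : ((2:ℝ≥0∞)^n) ≠ ⊤ := two_zpow_ne_top n
    have e1 : c^n = ((2:ℝ≥0∞)^n)^θ := rpow_zpow_comm θ n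
    have e2 : ((2:ℝ≥0∞)^n)⁻¹ = ((2:ℝ≥0∞)^n)^(-1:ℝ) := (ENNReal.rpow_neg_one _).symm
    have e3 : c'^n = ((2:ℝ≥0∞)^n)^(θ-1) := rpow_zpow_comm (θ-1) n
    rw [e1, e2, e3]
    rw [mul_comm (2:ℝ≥0∞) _, ← mul_assoc, ← ENNReal.rpow_add _ _ hT0 hTt]
    rw [show θ + (-1) = θ - 1 by ring, mul_comm]
  -- step 4: pointwise integrand bound
  have step4 : ∀ n : ℤ, ∑' j, (if (2:ℝ≥0∞)^n < a j then volume (E j) else 0)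
      ≤ (∫⁻ x, v x * Set.indicator {y | (2:ℝ≥0∞)^n < 2 * v y} 1 x)
          * (2 * ((2:ℝ≥0∞)^n)⁻¹) := by
    intro n
    have := W_bound hd hθ k m E hEmeas hEsub hdisj v hv hN n
    calc ∑' j, (if (2:ℝ≥0∞)^n < a j then volume (E j) else 0)
        ≤ 2 * ((2:ℝ≥0∞)^n)⁻¹ *
            ∫⁻ x, v x * Set.indicator {y | (2:ℝ≥0∞)^n < 2 * v y} 1 x := this
    _ = _ := by rw [mul_comm]
  -- step 5: integrate the layers
  set D : ℝ≥0∞ := (1 - c'⁻¹)⁻¹ with hD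
  have hwm : ∀ n : ℤ, Measurable
      (fun x : EuclideanSpace ℝ (Fin d) =>
        v x * Set.indicator {y | (2:ℝ≥0∞)^n < 2 * v y} 1 x) := by
    intro n
    exact hv.mul (measurable_one.indicator ((hv.const_mul 2) measurableSet_Ioi))
  have step5 : ∑' n : ℤ, c'^n * ∫⁻ x, v x * Set.indicator {y | (2:ℝ≥0∞)^n < 2 * v y} 1 x
      ≤ c' * D * ∫⁻ x, v x ^ θ := by
    have e1 : ∀ n : ℤ, c'^n * (∫⁻ x, v x * Set.indicator {y | (2:ℝ≥0∞)^n < 2 * v y} 1 x)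
        = ∫⁻ x, c'^n * (v x * Set.indicator {y | (2:ℝ≥0∞)^n < 2 * v y} 1 x) :=
      fun n => (lintegral_const_mul (c'^n) (hwm n)).symm
    calc ∑' n : ℤ, c'^n * ∫⁻ x, v x * Set.indicator {y | (2:ℝ≥0∞)^n < 2 * v y} 1 x
        = ∑' n : ℤ, ∫⁻ x, c'^n * (v x * Set.indicator {y | (2:ℝ≥0∞)^n < 2 * v y} 1 x) :=
          tsum_congr e1
    _ = ∫⁻ x, ∑' n : ℤ, c'^n * (v x * Set.indicator {y | (2:ℝ≥0∞)^n < 2 * v y} 1 x) :=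
          (lintegral_tsum (fun n => ((measurable_const.mul (hwm n))).aemeasurable)).symm
    _ ≤ ∫⁻ x, c' * D * v x ^ θ := by
          apply lintegral_mono
          intro x
          have e2 : ∀ n : ℤ, c'^n * (v x * Set.indicator {y | (2:ℝ≥0∞)^n < 2 * v y} 1 x)
              = v x * (if (2:ℝ≥0∞)^n < 2 * v x then c'^n else 0) := by
            intro n
            by_cases h : (2:ℝ≥0∞)^n < 2 * v x
            · rw [if_pos h, Set.indicator_of_mem (by exact h)]
              simp only [Pi.one_apply, mul_one]; ring
            · rw [if_neg h, Set.indicator_of_notMem (by exact h)]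
              simp
          calc ∑' n : ℤ, c'^n * (v x * Set.indicator {y | (2:ℝ≥0∞)^n < 2 * v y} 1 x)
              = v x * ∑' n : ℤ, (if (2:ℝ≥0∞)^n < 2 * v x then c'^n else 0) := by
                rw [← ENNReal.tsum_mul_left]
                exact tsum_congr e2
          _ ≤ v x * ((2 * v x) ^ (θ - 1) * D) :=
                mul_le_mul_right (layer_upper hθ1 (2 * v x)) _
          _ = c' * D * (v x * v x ^ (θ - 1)) := by
                rw [ENNReal.mul_rpow_of_nonneg _ _ hθ1.le]
                rw [show ((2:ℝ≥0∞)) ^ (θ-1) = c' from rfl]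
                ring
          _ = c' * D * v x ^ θ := by rw [self_mul_rpow hθ]
    _ = c' * D * ∫⁻ x, v x ^ θ := lintegral_const_mul' _ _
          (ENNReal.mul_ne_top (two_rpow_ne_top (θ-1)) (by
            rw [hD, ne_eq, ENNReal.inv_eq_top, tsub_eq_zero_iff_le, not_le]
            exact ENNReal.inv_lt_one.2 (one_lt_two_rpow hθ1)))
  -- final chain
  calc ∑' j, a j ^ θ * volume (E j)
      ≤ ∑' j, c * ∑' n : ℤ, (if (2:ℝ≥0∞)^n < a j then c^n * volume (E j) else 0) :=
        ENNReal.tsum_le_tsum step1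
  _ = c * ∑' j, ∑' n : ℤ, (if (2:ℝ≥0∞)^n < a j then c^n * volume (E j) else 0) :=
        ENNReal.tsum_mul_left
  _ = c * ∑' n : ℤ, c^n * ∑' j, (if (2:ℝ≥0∞)^n < a j then volume (E j) else 0) := by
        rw [step2]
  _ ≤ c * ∑' n : ℤ, c^n * ((∫⁻ x, v x * Set.indicator {y | (2:ℝ≥0∞)^n < 2 * v y} 1 x)
        * (2 * ((2:ℝ≥0∞)^n)⁻¹)) := by
        apply mul_le_mul_right
        apply ENNReal.tsum_le_tsum
        intro n
        exact mul_le_mul_right (step4 n) _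
  _ = c * ∑' n : ℤ, 2 * (c'^n *
        ∫⁻ x, v x * Set.indicator {y | (2:ℝ≥0∞)^n < 2 * v y} 1 x) := by
        congr 1
        apply tsum_congr
        intro n
        calc c^n * ((∫⁻ x, v x * Set.indicator {y | (2:ℝ≥0∞)^n < 2 * v y} 1 x)
              * (2 * ((2:ℝ≥0∞)^n)⁻¹))
            = (c^n * (2 * ((2:ℝ≥0∞)^n)⁻¹)) *
              ∫⁻ x, v x * Set.indicator {y | (2:ℝ≥0∞)^n < 2 * v y} 1 x := by ring
        _ = (2 * c'^n) * ∫⁻ x, v x * Set.indicator {y | (2:ℝ≥0∞)^n < 2 * v y} 1 x := by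
              rw [hcoeff n]
        _ = 2 * (c'^n * ∫⁻ x, v x * Set.indicator {y | (2:ℝ≥0∞)^n < 2 * v y} 1 x) := by ring
  _ = c * 2 * ∑' n : ℤ, c'^n *
        ∫⁻ x, v x * Set.indicator {y | (2:ℝ≥0∞)^n < 2 * v y} 1 x := by
        rw [ENNReal.tsum_mul_left, ← mul_assoc]
  _ ≤ c * 2 * (c' * D * ∫⁻ x, v x ^ θ) := mul_le_mul_right step5 _
  _ = coreConst θ * ∫⁻ x, v x ^ θ := by
        unfold coreConst
        rw [← hc, ← hc', ← hD]
        ring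

end Core2

/-- With `K(S) = min((λℓ_S)^α,1)/(λ^α|S|)`, `1 < q < p < ∞`, `1/r = 1/q − 1/p`,
`θ₁, θ₂ > 1`, `1/q = 1/(θ₂p) + θ₁/r` and `‖v‖_{L^{θ₁}}^{θ₁/r} < ∞`:
`[∑_S (K(S)|S|(v(S)/|S|)^{1/q})^r |E_𝒮(S)|]^{1/r}
  ≲ ‖v‖_{L^{θ₁}}^{θ₁/r} ⋅ sup_S K(S)|S|(v(S)/|S|)^{1/(θ₂p)}`. -/
theorem stmt16 (d : ℕ) (α q p r θ₁ θ₂ η : ℝ) (hα0 : 0 < α) (hαd : α < (d : ℝ))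
    (hq : 1 < q) (hqp : q < p) (hr : 1 / r = 1 / q - 1 / p)
    (hθ₁ : 1 < θ₁) (hθ₂ : 1 < θ₂) (hexp : 1 / q = 1 / (θ₂ * p) + θ₁ / r)
    (hη0 : 0 < η) (hη1 : η < 1) :
    ∃ C : ℝ≥0∞, C ≠ ⊤ ∧
      ∀ (lam : ℝ), 0 < lam →
      ∀ (ι : Type) (_ : Countable ι) (k : ι → ℤ) (m : ι → Fin d → ℤ)
        (E : ι → Set (EuclideanSpace ℝ (Fin d)))
        (_ : ∀ j, MeasurableSet (E j))
        (_ : ∀ j, E j ⊆ dyadicCube d (k j) (m j))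
        (_ : ∀ j, ENNReal.ofReal η * volume (dyadicCube d (k j) (m j)) ≤ volume (E j))
        (_ : Pairwise (Function.onFun Disjoint E))
        (K : ι → ℝ≥0∞)
        (_ : ∀ j, K j = ENNReal.ofReal (min ((lam * (2:ℝ) ^ (-(k j))) ^ α) 1) /
            (ENNReal.ofReal (lam ^ α) * volume (dyadicCube d (k j) (m j))))
        (v : EuclideanSpace ℝ (Fin d) → ℝ≥0∞) (_ : Measurable v)
        (_ : (∫⁻ x, v x ^ θ₁) ≠ ⊤),
        (∑' j, (K j * volume (dyadicCube d (k j) (m j)) *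
            ((∫⁻ x in dyadicCube d (k j) (m j), v x) /
              volume (dyadicCube d (k j) (m j))) ^ (1 / q)) ^ r *
            volume (E j)) ^ (1 / r) ≤
          C * (∫⁻ x, v x ^ θ₁) ^ (1 / r) *
            ⨆ j, K j * volume (dyadicCube d (k j) (m j)) *
              ((∫⁻ x in dyadicCube d (k j) (m j), v x) /
                volume (dyadicCube d (k j) (m j))) ^ (1 / (θ₂ * p)) := by
  classical
  have hd1 : 1 ≤ d := by
    have : (0:ℝ) < (d:ℝ) := lt_trans hα0 hαd
    exact_mod_cast Nat.cast_pos.1 this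
  have hq0 : (0:ℝ) < q := by linarith
  have hrinv : 0 < 1 / r := by
    rw [hr, sub_pos]
    exact one_div_lt_one_div_of_lt hq0 hqp
  have hrpos : 0 < r := one_div_pos.1 hrinv
  refine ⟨(coreConst θ₁) ^ (1/r), ENNReal.rpow_ne_top_of_nonneg hrinv.le
    (coreConst_ne_top hθ₁), ?_⟩
  intro lam hlam ι hι k m E hEmeas hEsub hsparse hdisj K hK v hv hN
  haveI := hι
  set S : ι → Set (EuclideanSpace ℝ (Fin d)) := fun j => dyadicCube d (k j) (m j) with hS
  set a : ι → ℝ≥0∞ := fun j => (∫⁻ x in S j, v x) / volume (S j) with ha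
  set B : ι → ℝ≥0∞ := fun j => K j * volume (S j) * a j ^ (1 / (θ₂ * p)) with hB
  set T : ℝ≥0∞ := ⨆ j, B j with hT
  have key : ∀ j, (K j * volume (S j) * a j ^ (1/q)) ^ r * volume (E j)
      ≤ T ^ r * (a j ^ θ₁ * volume (E j)) := by
    intro j
    rcases eq_or_ne (a j) 0 with haj | haj
    · rw [haj, ENNReal.zero_rpow_of_pos (by positivity), mul_zero,
        ENNReal.zero_rpow_of_pos hrpos, zero_mul]
      exact zero_le
    · have hV0 : volume (S j) ≠ 0 := volume_dyadicCube_ne_zero d (k j) (m j)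
      have hVt : volume (S j) ≠ ⊤ := volume_dyadicCube_ne_top d (k j) (m j)
      have hat : a j ≠ ⊤ := avg_ne_top hv hθ₁ hN hV0 hVt
      have hsplit : a j ^ (1/q) = a j ^ (1/(θ₂ * p)) * a j ^ (θ₁ / r) := by
        rw [← ENNReal.rpow_add _ _ haj hat, ← hexp]
      have hA : K j * volume (S j) * a j ^ (1/q) = B j * a j ^ (θ₁ / r) := by
        rw [hsplit, hB]
        simp only []
        ring
      rw [hA, ENNReal.mul_rpow_of_nonneg _ _ hrpos.le]
      have hBr : (B j) ^ r ≤ T ^ r := ENNReal.rpow_le_rpow (le_iSup B j) hrpos.le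
      have hexp2 : (a j ^ (θ₁ / r)) ^ r = a j ^ θ₁ := by
        rw [← ENNReal.rpow_mul, div_mul_cancel₀ _ hrpos.ne']
      rw [hexp2, mul_assoc]
      exact mul_le_mul_left hBr _
  have hsum : ∑' j, (K j * volume (S j) * a j ^ (1/q)) ^ r * volume (E j)
      ≤ T ^ r * (coreConst θ₁ * ∫⁻ x, v x ^ θ₁) := by
    calc ∑' j, (K j * volume (S j) * a j ^ (1/q)) ^ r * volume (E j)
        ≤ ∑' j, T ^ r * (a j ^ θ₁ * volume (E j)) := ENNReal.tsum_le_tsum key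
    _ = T ^ r * ∑' j, a j ^ θ₁ * volume (E j) := ENNReal.tsum_mul_left
    _ ≤ T ^ r * (coreConst θ₁ * ∫⁻ x, v x ^ θ₁) := mul_le_mul_right
        (core_sparse hd1 hθ₁ k m E hEmeas hEsub hdisj v hv hN) _
  calc (∑' j, (K j * volume (S j) * a j ^ (1/q)) ^ r * volume (E j)) ^ (1/r)
      ≤ (T ^ r * (coreConst θ₁ * ∫⁻ x, v x ^ θ₁)) ^ (1/r) :=
        ENNReal.rpow_le_rpow hsum hrinv.le
  _ = (T ^ r) ^ (1/r) * ((coreConst θ₁) ^ (1/r) * (∫⁻ x, v x ^ θ₁) ^ (1/r)) := by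
        rw [ENNReal.mul_rpow_of_nonneg _ _ hrinv.le, ENNReal.mul_rpow_of_nonneg _ _ hrinv.le]
  _ = T * ((coreConst θ₁) ^ (1/r) * (∫⁻ x, v x ^ θ₁) ^ (1/r)) := by
        rw [← ENNReal.rpow_mul, mul_one_div_cancel hrpos.ne', ENNReal.rpow_one]
  _ = (coreConst θ₁) ^ (1/r) * (∫⁻ x, v x ^ θ₁) ^ (1/r) * T := by ring
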